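/- In the one-round Thompson sampling setup, assume additionally that the expected losses are linear: there exist maps v : Θ → ℝ^d and φ : Fin K → ℝ^d such that ℓ(θ,a) = ⟨v(θ), φ(a)⟩ for all θ and a. Then the squared regret satisfies R² ≤ (d/2)·I; equivalently, the lifted information ratio of Thompson sampling with d-dimensional linear expected losses taking values in [0,1] is at most d/2. -/

import Mathlib

/-- Binary relative entropy `g(p‖q)` (with Lean's conventions `log 0 = 0`,
`0/0 = 0`, realizing `0 · log 0 = 0`). -/
noncomputable def binRelEnt (p q : ℝ) : ℝ :=
  p * Real.log (p / q) + (1 - p) * Real.log ((1 - p) / (1 - q))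

lemma hasDerivAt_clog (c : ℝ) (hc : 0 ≤ c) {t : ℝ} (ht : 0 < t) :
    HasDerivAt (fun t => c * Real.log (c / t)) (-c / t) t := by
  rcases eq_or_lt_of_le hc with h | h
  · simp only [← h, zero_mul, neg_zero, zero_div]
    exact hasDerivAt_const t 0
  · have h1 : HasDerivAt (fun t : ℝ => c * (Real.log c - Real.log t)) (-c / t) t := by
      have := ((Real.hasDerivAt_log (ne_of_gt ht)).const_sub (Real.log c)).const_mul c
      refine this.congr_deriv ?_
      ring
    apply h1.congr_of_eventuallyEq
    filter_upwards [eventually_gt_nhds ht] with x hx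
    rw [Real.log_div (ne_of_gt h) (ne_of_gt hx), mul_sub]

lemma hasDerivAt_clog' (c : ℝ) (hc : 0 ≤ c) {t : ℝ} (ht : t < 1) :
    HasDerivAt (fun t => c * Real.log (c / (1 - t))) (c / (1 - t)) t := by
  have h0 : (0:ℝ) < 1 - t := by linarith
  have := (hasDerivAt_clog c hc h0).comp t ((hasDerivAt_id t).const_sub 1)
  refine this.congr_deriv ?_
  ring

lemma hasDerivAt_F (p : ℝ) (hp0 : 0 ≤ p) (hp1 : p ≤ 1) {t : ℝ} (ht0 : 0 < t) (ht1 : t < 1) :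
    HasDerivAt (fun t => binRelEnt p t - 2 * (p - t) ^ 2)
      ((t - p) * (1 - 2 * t) ^ 2 / (t * (1 - t))) t := by
  have h1 := hasDerivAt_clog p hp0 ht0
  have h2 := hasDerivAt_clog' (1 - p) (by linarith) ht1
  have h3 : HasDerivAt (fun t : ℝ => 2 * (p - t) ^ 2) (4 * (t - p)) t := by
    have := (((hasDerivAt_id t).const_sub p).pow 2).const_mul 2
    refine this.congr_deriv ?_
    simp only [id]
    ring
  have := (h1.add h2).sub h3
  refine this.congr_deriv ?_
  have hne : t ≠ 0 := ne_of_gt ht0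
  have hne1 : (1:ℝ) - t ≠ 0 := by linarith
  field_simp
  ring

lemma continuousOn_clog (c : ℝ) (hc : 0 ≤ c) {s : Set ℝ} (hs : ∀ t ∈ s, 0 < t) :
    ContinuousOn (fun t => c * Real.log (c / t)) s := by
  rcases eq_or_lt_of_le hc with h | h
  · simp only [← h, zero_mul]; exact continuousOn_const
  · intro t hts
    apply ContinuousWithinAt.mono _ (Set.subset_univ s)
    apply ContinuousAt.continuousWithinAt
    apply ContinuousAt.mul continuousAt_const
    exact (Real.continuousAt_log
      (div_ne_zero (ne_of_gt h) (ne_of_gt (hs t hts)))).comp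
      (continuousAt_const.div continuousAt_id (ne_of_gt (hs t hts)))

lemma continuousOn_clog' (c : ℝ) (hc : 0 ≤ c) {s : Set ℝ} (hs : ∀ t ∈ s, t < 1) :
    ContinuousOn (fun t => c * Real.log (c / (1 - t))) s := by
  exact (continuousOn_clog c hc (s := (fun t : ℝ => 1 - t) '' s)
    (by rintro x ⟨y, hy, rfl⟩; simpa using hs y hy)).comp
    ((continuousOn_const (c := (1:ℝ))).sub continuousOn_id) (Set.mapsTo_image _ _)

lemma binRelEnt_self {p : ℝ} (hp0 : 0 ≤ p) (hp1 : p ≤ 1) : binRelEnt p p = 0 := by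
  rcases eq_or_lt_of_le hp0 with h | h
  · simp [binRelEnt, ← h]
  rcases eq_or_lt_of_le hp1 with h1 | h1
  · rw [binRelEnt, div_self (ne_of_gt h)]
    simp [← h1]
  · rw [binRelEnt, div_self (ne_of_gt h), div_self (by linarith : (1:ℝ) - p ≠ 0)]
    simp

example : True := trivial

lemma continuousOn_clog0 (c : ℝ) (hc : 0 ≤ c) {s : Set ℝ} (hs : c = 0 ∨ ∀ t ∈ s, 0 < t) :
    ContinuousOn (fun t => c * Real.log (c / t)) s := by
  rcases hs with h | h
  · simp only [h, zero_mul]; exact continuousOn_const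
  · exact continuousOn_clog c hc h

lemma continuousOn_clog0' (c : ℝ) (hc : 0 ≤ c) {s : Set ℝ} (hs : c = 0 ∨ ∀ t ∈ s, t < 1) :
    ContinuousOn (fun t => c * Real.log (c / (1 - t))) s := by
  rcases hs with h | h
  · simp only [h, zero_mul]; exact continuousOn_const
  · exact continuousOn_clog' c hc h

lemma continuousOn_F (p : ℝ) (hp0 : 0 ≤ p) (hp1 : p ≤ 1) {s : Set ℝ}
    (h1 : p = 0 ∨ ∀ t ∈ s, 0 < t) (h2 : 1 - p = 0 ∨ ∀ t ∈ s, t < 1) :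
    ContinuousOn (fun t => binRelEnt p t - 2 * (p - t) ^ 2) s := by
  unfold binRelEnt
  apply ContinuousOn.sub
  · rcases h2 with h2 | h2
    · exact (continuousOn_clog0 p hp0 h1).add (by simp only [h2, zero_mul]; exact
        continuousOn_const)
    · exact (continuousOn_clog0 p hp0 h1).add (continuousOn_clog' (1 - p) (by linarith) h2)
  · exact Continuous.continuousOn (by continuity)

lemma pinsker {p q : ℝ} (hp : p ∈ Set.Icc (0:ℝ) 1) (hq : q ∈ Set.Ioo (0:ℝ) 1) :
    2 * (p - q) ^ 2 ≤ binRelEnt p q := by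
  obtain ⟨hp0, hp1⟩ := hp
  obtain ⟨hq0, hq1⟩ := hq
  have hFp : binRelEnt p p - 2 * (p - p) ^ 2 = 0 := by
    simp [binRelEnt_self hp0 hp1]
  have key : 0 ≤ binRelEnt p q - 2 * (p - q) ^ 2 := by
    rcases le_or_gt p q with hpq | hpq
    · have hmono : MonotoneOn (fun t => binRelEnt p t - 2 * (p - t) ^ 2) (Set.Icc p q) := by
        apply monotoneOn_of_deriv_nonneg (convex_Icc p q)
        · apply continuousOn_F p hp0 hp1
          · rcases eq_or_lt_of_le hp0 with h | h
            · exact Or.inl h.symm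
            · exact Or.inr (fun t ht => lt_of_lt_of_le h ht.1)
          · exact Or.inr (fun t ht => lt_of_le_of_lt ht.2 hq1)
        · intro t ht
          rw [interior_Icc] at ht
          exact ((hasDerivAt_F p hp0 hp1 (lt_of_le_of_lt hp0 ht.1)
            (lt_trans ht.2 hq1)).differentiableAt).differentiableWithinAt
        · intro t ht
          rw [interior_Icc] at ht
          rw [(hasDerivAt_F p hp0 hp1 (lt_of_le_of_lt hp0 ht.1) (lt_trans ht.2 hq1)).deriv]
          have h0t : 0 < t := lt_of_le_of_lt hp0 ht.1
          have ht1 : t < 1 := lt_trans ht.2 hq1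
          apply div_nonneg
          · exact mul_nonneg (by linarith [ht.1]) (sq_nonneg _)
          · exact (mul_pos h0t (by linarith)).le
      have := hmono (Set.left_mem_Icc.mpr hpq) ⟨hpq, le_refl q⟩ hpq
      simp only [] at this
      linarith [this, hFp]
    · have hmono : AntitoneOn (fun t => binRelEnt p t - 2 * (p - t) ^ 2) (Set.Icc q p) := by
        apply antitoneOn_of_deriv_nonpos (convex_Icc q p)
        · apply continuousOn_F p hp0 hp1
          · exact Or.inr (fun t ht => lt_of_lt_of_le hq0 ht.1)
          · rcases eq_or_lt_of_le hp1 with h | h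
            · exact Or.inl (by linarith)
            · exact Or.inr (fun t ht => lt_of_le_of_lt ht.2 h)
        · intro t ht
          rw [interior_Icc] at ht
          exact ((hasDerivAt_F p hp0 hp1 (lt_trans hq0 ht.1)
            (lt_of_lt_of_le ht.2 hp1)).differentiableAt).differentiableWithinAt
        · intro t ht
          rw [interior_Icc] at ht
          rw [(hasDerivAt_F p hp0 hp1 (lt_trans hq0 ht.1) (lt_of_lt_of_le ht.2 hp1)).deriv]
          have h0t : 0 < t := lt_trans hq0 ht.1
          have ht1 : t < 1 := lt_of_lt_of_le ht.2 hp1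
          apply div_nonpos_of_nonpos_of_nonneg
          · apply mul_nonpos_of_nonpos_of_nonneg
            · linarith [ht.2]
            · positivity
          · exact (mul_pos h0t (by linarith)).le
      have := hmono ⟨le_refl q, le_of_lt hpq⟩ (Set.right_mem_Icc.mpr (le_of_lt hpq)) (le_of_lt hpq)
      simp only [] at this
      linarith [this, hFp]
  linarith [key]

lemma binRelEnt_le {p q : ℝ} (hp : p ∈ Set.Icc (0:ℝ) 1) (hq : q ∈ Set.Ioo (0:ℝ) 1) :
    binRelEnt p q ≤ -Real.log q - Real.log (1 - q) := by
  obtain ⟨hp0, hp1⟩ := hp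
  obtain ⟨hq0, hq1⟩ := hq
  have hlq : 0 < -Real.log q := by
    simpa using Real.log_neg hq0 hq1
  have hlq1 : 0 < -Real.log (1 - q) := by
    simpa using Real.log_neg (by linarith) (by linarith)
  have key : ∀ c r : ℝ, 0 ≤ c → c ≤ 1 → 0 < r → r < 1 →
      c * Real.log (c / r) ≤ -Real.log r := by
    intro c r hc0 hc1 hr0 hr1
    have hlr : 0 < -Real.log r := by simpa using Real.log_neg hr0 hr1
    rcases eq_or_lt_of_le hc0 with h | h
    · rw [← h]; simpa using hlr.le
    · have h1 : Real.log (c / r) = Real.log c - Real.log r :=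
        Real.log_div (ne_of_gt h) (ne_of_gt hr0)
      have h2 : Real.log c ≤ 0 := Real.log_nonpos hc0 hc1
      have h3 : c * Real.log (c / r) ≤ c * (-Real.log r) := by
        apply mul_le_mul_of_nonneg_left _ hc0
        rw [h1]; linarith
      calc c * Real.log (c / r) ≤ c * (-Real.log r) := h3
        _ ≤ 1 * (-Real.log r) := mul_le_mul_of_nonneg_right hc1 hlr.le
        _ = -Real.log r := one_mul _
  have k1 := key p q hp0 hp1 hq0 hq1
  have k2 := key (1 - p) (1 - q) (by linarith) (by linarith) (by linarith) (by linarith)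
  unfold binRelEnt
  linarith

lemma tsum_cauchy_schwarz {ι : Type*} {f x : ι → ℝ} (hf : ∀ i, 0 ≤ f i) (h1 : Summable f)
    (h2 : Summable (fun i => f i * x i)) (h3 : Summable (fun i => f i * x i ^ 2)) :
    (∑' i, f i * x i) ^ 2 ≤ (∑' i, f i) * ∑' i, f i * x i ^ 2 := by
  have hx2 : ∀ i, 0 ≤ f i * x i ^ 2 := fun i => mul_nonneg (hf i) (sq_nonneg _)
  have key : ∀ s : Finset ι, (∑ i ∈ s, f i * x i) ^ 2 ≤ (∑' i, f i) * ∑' i, f i * x i ^ 2 := by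
    intro s
    calc (∑ i ∈ s, f i * x i) ^ 2
        = (∑ i ∈ s, Real.sqrt (f i) * (Real.sqrt (f i) * x i)) ^ 2 := by
          congr 1
          refine Finset.sum_congr rfl fun i _ => ?_
          rw [← mul_assoc, Real.mul_self_sqrt (hf i)]
      _ ≤ (∑ i ∈ s, Real.sqrt (f i) ^ 2) * ∑ i ∈ s, (Real.sqrt (f i) * x i) ^ 2 :=
          Finset.sum_mul_sq_le_sq_mul_sq s _ _
      _ = (∑ i ∈ s, f i) * ∑ i ∈ s, f i * x i ^ 2 := by
          congr 1
          · exact Finset.sum_congr rfl fun i _ => Real.sq_sqrt (hf i)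
          · refine Finset.sum_congr rfl fun i _ => ?_
            rw [mul_pow, Real.sq_sqrt (hf i)]
      _ ≤ (∑' i, f i) * ∑' i, f i * x i ^ 2 := by
          apply mul_le_mul (Summable.sum_le_tsum s (fun i _ => hf i) h1)
            (Summable.sum_le_tsum s (fun i _ => hx2 i) h3)
            (Finset.sum_nonneg fun i _ => hx2 i) (tsum_nonneg hf)
  exact le_of_tendsto (h2.hasSum.pow 2) (Filter.Eventually.of_forall key)

open scoped RealInnerProductSpace

lemma exists_dual_vec {K d : ℕ} (φ : Fin K → EuclideanSpace ℝ (Fin d)) (c : Fin K → ℝ)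
    (hc : ∀ y : Fin K → ℝ, (∑ b, y b • φ b) = 0 → (∑ b, y b * c b) = 0) :
    ∃ u : EuclideanSpace ℝ (Fin d), ∀ b, ⟪u, φ b⟫ = c b := by
  classical
  set F : EuclideanSpace ℝ (Fin d) →ₗ[ℝ] EuclideanSpace ℝ (Fin K) :=
    (WithLp.linearEquiv 2 ℝ (Fin K → ℝ)).symm.toLinearMap.comp
      (LinearMap.pi fun b => (innerₛₗ ℝ (φ b) : EuclideanSpace ℝ (Fin d) →ₗ[ℝ] ℝ)) with hF
  have hFapp : ∀ (x : EuclideanSpace ℝ (Fin d)) (b : Fin K), F x b = ⟪φ b, x⟫ := by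
    intro x b
    rfl
  set V := LinearMap.range F with hV
  have hinnerK : ∀ (w z : EuclideanSpace ℝ (Fin K)), ⟪w, z⟫ = ∑ b, w b * z b := by
    intro w z
    simp [PiLp.inner_apply, RCLike.inner_apply, conj_trivial]
    exact Finset.sum_congr rfl fun _ _ => mul_comm _ _
  obtain ⟨y, hy, z, hz, hczy⟩ := V.exists_add_mem_mem_orthogonal
    ((WithLp.equiv 2 (Fin K → ℝ)).symm c)
  -- z is orthogonal to every F x
  have hzF : ∀ x : EuclideanSpace ℝ (Fin d), ∑ b, ⟪φ b, x⟫ * z b = 0 := by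
    intro x
    have := (Submodule.mem_orthogonal V z).mp hz (F x) (LinearMap.mem_range_self F x)
    rw [hinnerK] at this
    simpa [hFapp] using this
  have hx0 : (∑ b, z b • φ b) = 0 := by
    have h := hzF (∑ b, z b • φ b)
    have h2 : ∑ b, ⟪φ b, ∑ b', z b' • φ b'⟫ * z b
        = ⟪∑ b, z b • φ b, ∑ b', z b' • φ b'⟫ := by
      rw [sum_inner]
      refine Finset.sum_congr rfl fun b _ => ?_
      rw [real_inner_smul_left]
      ring
    rw [h2] at h
    exact inner_self_eq_zero.mp h
  have hzc : ∑ b, z b * c b = 0 := hc (fun b => z b) hx0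
  have hz0 : z = 0 := by
    have h1 : ⟪(WithLp.equiv 2 (Fin K → ℝ)).symm c, z⟫ = 0 := by
      rw [hinnerK]
      simpa [WithLp.equiv_symm_apply, PiLp.toLp_apply, mul_comm] using hzc
    have h2 : ⟪y, z⟫ = 0 := (Submodule.mem_orthogonal V z).mp hz y hy
    rw [hczy, inner_add_left, h2, zero_add] at h1
    exact inner_self_eq_zero.mp h1
  obtain ⟨u, hu⟩ : (WithLp.equiv 2 (Fin K → ℝ)).symm c ∈ V := by
    rw [hczy, hz0, add_zero]; exact hy
  refine ⟨u, fun b => ?_⟩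
  rw [real_inner_comm, ← hFapp u b, hu]
  simp [WithLp.equiv_symm_apply, PiLp.toLp_apply]

open scoped RealInnerProductSpace

section LinAlg

variable {K d : ℕ}

local notation "E" => EuclideanSpace ℝ (Fin d)

lemma lin_alg_eps (π : Fin K → ℝ) (hπ : ∀ a, 0 ≤ π a)
    (u φ : Fin K → E) (hu0 : ∀ a, π a = 0 → u a = 0) {ε : ℝ} (hε : 0 < ε) :
    (∑ a, ⟪u a, φ a⟫) ^ 2 ≤
      ((∑ a, (∑ b, π b * ⟪u a, φ b⟫ ^ 2) / π a) + ε * ∑ a, ‖u a‖ ^ 2 / π a) * d := by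
  classical
  -- the regularized operator
  set T : E →ₗ[ℝ] E :=
    ε • LinearMap.id + ∑ b, π b • ((innerₛₗ ℝ (φ b)).smulRight (φ b)) with hT
  have hTapp : ∀ x : E, T x = ε • x + ∑ b, (π b * ⟪φ b, x⟫) • φ b := by
    intro x
    simp [hT, LinearMap.sum_apply, LinearMap.smulRight_apply, smul_smul]
  have hinnerT : ∀ x y : E, ⟪x, T y⟫ = ε * ⟪x, y⟫ + ∑ b, π b * (⟪φ b, y⟫ * ⟪x, φ b⟫) := by
    intro x y
    rw [hTapp, inner_add_right, inner_sum, real_inner_smul_right]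
    congr 1
    refine Finset.sum_congr rfl fun b _ => ?_
    rw [real_inner_smul_right]
    ring
  have hsymm : ∀ x y : E, ⟪x, T y⟫ = ⟪T x, y⟫ := by
    intro x y
    rw [hinnerT, ← real_inner_comm (T x) y, hinnerT]
    congr 1
    · rw [real_inner_comm]
    · refine Finset.sum_congr rfl fun b _ => ?_
      rw [real_inner_comm x (φ b), real_inner_comm y (φ b)]
      ring
  have hQ : ∀ x : E, ⟪x, T x⟫ = ε * ‖x‖ ^ 2 + ∑ b, π b * ⟪φ b, x⟫ ^ 2 := by
    intro x
    rw [hinnerT, real_inner_self_eq_norm_sq]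
    congr 1
    refine Finset.sum_congr rfl fun b _ => ?_
    rw [real_inner_comm x (φ b)]
    ring
  have hQpos : ∀ x : E, 0 ≤ ⟪x, T x⟫ := by
    intro x
    rw [hQ]
    have : 0 ≤ ∑ b, π b * ⟪φ b, x⟫ ^ 2 :=
      Finset.sum_nonneg fun b _ => mul_nonneg (hπ b) (sq_nonneg _)
    positivity
  have hQposs : ∀ x : E, ε * ‖x‖ ^ 2 ≤ ⟪x, T x⟫ := by
    intro x
    rw [hQ]
    have : 0 ≤ ∑ b, π b * ⟪φ b, x⟫ ^ 2 :=
      Finset.sum_nonneg fun b _ => mul_nonneg (hπ b) (sq_nonneg _)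
    linarith
  -- Cauchy-Schwarz for the bilinear form
  have hCS : ∀ x y : E, ⟪x, T y⟫ ^ 2 ≤ ⟪x, T x⟫ * ⟪y, T y⟫ := by
    intro x y
    have hquad : ∀ t : ℝ, 0 ≤ ⟪y, T y⟫ * (t * t) + (2 * ⟪x, T y⟫) * t + ⟪x, T x⟫ := by
      intro t
      have h := hQpos (x + t • y)
      have hexp : ⟪x + t • y, T (x + t • y)⟫
          = ⟪y, T y⟫ * (t * t) + (2 * ⟪x, T y⟫) * t + ⟪x, T x⟫ := by
        rw [map_add, map_smul, inner_add_left, inner_add_right, inner_add_right,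
          real_inner_smul_left, real_inner_smul_left, real_inner_smul_right,
          real_inner_smul_right]
        have h2 : ⟪y, T x⟫ = ⟪x, T y⟫ := by rw [hsymm y x, real_inner_comm]
        rw [h2]
        ring
      linarith [hexp ▸ h]
    have := discrim_le_zero hquad
    rw [discrim] at this
    nlinarith [this]
  -- bijectivity
  have hinj : Function.Injective T := by
    rw [← LinearMap.ker_eq_bot]
    apply (Submodule.eq_bot_iff _).mpr
    intro x hx
    have hx' : T x = 0 := hx
    have := hQposs x
    rw [hx', inner_zero_right] at this
    have : ‖x‖ ^ 2 ≤ 0 := by nlinarith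
    have : ‖x‖ = 0 := by nlinarith [sq_nonneg ‖x‖, norm_nonneg x]
    exact norm_eq_zero.mp this
  have hbij : Function.Bijective T :=
    ⟨hinj, (LinearMap.injective_iff_surjective).mp hinj⟩
  set e := LinearEquiv.ofBijective T hbij with he
  set z : Fin K → E := fun a => e.symm (φ a) with hz
  have hTz : ∀ a, T (z a) = φ a := fun a => e.apply_symm_apply (φ a)
  have hsymmz : ∀ x : E, e.symm (T x) = x := fun x => e.symm_apply_apply x
  set bb := EuclideanSpace.basisFun (Fin d) ℝ with hbb
  have hSpos : ∀ x : E, 0 ≤ ⟪x, e.symm x⟫ := by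
    intro x
    have hx : T (e.symm x) = x := e.apply_symm_apply x
    calc (0:ℝ) ≤ ⟪e.symm x, T (e.symm x)⟫ := hQpos _
      _ = ⟪x, e.symm x⟫ := by rw [hx, real_inner_comm]
  have hd : (d : ℝ) = ε * (∑ i, ⟪(bb i : E), e.symm (bb i)⟫) + ∑ c, π c * ⟪φ c, z c⟫ := by
    have h1 : ∀ i, (1 : ℝ) = ε * ⟪(bb i : E), e.symm (bb i)⟫
        + ∑ c, π c * (⟪φ c, (bb i : E)⟫ * ⟪(bb i : E), z c⟫) := by
      intro i
      have hone : ⟪(bb i : E), (bb i : E)⟫ = 1 := by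
        rw [real_inner_self_eq_norm_sq, bb.orthonormal.1 i]
        norm_num
      have hexpand : (bb i : E) = ε • e.symm (bb i)
          + ∑ c, (π c * ⟪φ c, (bb i : E)⟫) • z c := by
        conv_lhs => rw [← hsymmz (bb i)]
        rw [hTapp, map_add, map_smul, map_sum]
        congr 1
        refine Finset.sum_congr rfl fun c _ => ?_
        rw [map_smul]
      calc (1:ℝ) = ⟪(bb i : E), (bb i : E)⟫ := hone.symm
        _ = ⟪(bb i : E), ε • e.symm (bb i) + ∑ c, (π c * ⟪φ c, (bb i : E)⟫) • z c⟫ := by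
            rw [← hexpand]
        _ = ε * ⟪(bb i : E), e.symm (bb i)⟫
            + ∑ c, π c * (⟪φ c, (bb i : E)⟫ * ⟪(bb i : E), z c⟫) := by
            rw [inner_add_right, real_inner_smul_right, inner_sum]
            congr 1
            refine Finset.sum_congr rfl fun c _ => ?_
            rw [real_inner_smul_right]
            ring
    calc (d : ℝ) = ∑ _i : Fin d, (1:ℝ) := by simp
      _ = ∑ i, (ε * ⟪(bb i : E), e.symm (bb i)⟫
            + ∑ c, π c * (⟪φ c, (bb i : E)⟫ * ⟪(bb i : E), z c⟫)) :=
          Finset.sum_congr rfl fun i _ => h1 i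
      _ = ε * (∑ i, ⟪(bb i : E), e.symm (bb i)⟫) + ∑ c, π c * ⟪φ c, z c⟫ := by
          rw [Finset.sum_add_distrib, Finset.mul_sum]
          congr 1
          rw [Finset.sum_comm]
          refine Finset.sum_congr rfl fun c _ => ?_
          rw [← Finset.mul_sum, bb.sum_inner_mul_inner]
  have htr : ∑ c, π c * ⟪φ c, z c⟫ ≤ (d : ℝ) := by
    have h0 : 0 ≤ ∑ i, ⟪(bb i : E), e.symm (bb i)⟫ :=
      Finset.sum_nonneg fun i _ => hSpos _
    nlinarith [hd, hε, h0]
  -- nonnegativity of the diagonal entries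
  have hzQ : ∀ a, ⟪φ a, z a⟫ = ⟪z a, T (z a)⟫ := by
    intro a
    rw [hTz, real_inner_comm]
  have hφz : ∀ a, 0 ≤ ⟪φ a, z a⟫ := fun a => (hzQ a) ▸ hQpos (z a)
  -- step 1 : per-index Cauchy-Schwarz
  have step1 : |∑ a, ⟪u a, φ a⟫| ≤
      ∑ a, Real.sqrt (⟪u a, T (u a)⟫ / π a) * Real.sqrt (π a * ⟪φ a, z a⟫) := by
    refine le_trans (Finset.abs_sum_le_sum_abs _ _) (Finset.sum_le_sum fun a _ => ?_)
    rcases eq_or_lt_of_le (hπ a) with h | h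
    · rw [hu0 a h.symm]
      simp only [inner_zero_left, abs_zero]
      positivity
    · have hCSa : ⟪u a, φ a⟫ ^ 2 ≤ ⟪u a, T (u a)⟫ * ⟪φ a, z a⟫ := by
        have h5 := hCS (u a) (z a)
        rw [hTz] at h5
        rwa [← real_inner_comm (z a) (φ a)] at h5
      have habs : |⟪u a, φ a⟫| ≤ Real.sqrt (⟪u a, T (u a)⟫ * ⟪φ a, z a⟫) := by
        rw [← Real.sqrt_sq_eq_abs]
        exact Real.sqrt_le_sqrt hCSa
      refine le_trans habs (le_of_eq ?_)
      rw [← Real.sqrt_mul (div_nonneg (hQpos (u a)) (hπ a))]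
      congr 1
      field_simp
  -- step 2: Cauchy-Schwarz over the sum
  have h2 : (∑ a, ⟪u a, φ a⟫) ^ 2 ≤
      (∑ a, ⟪u a, T (u a)⟫ / π a) * (∑ a, π a * ⟪φ a, z a⟫) := by
    have hs := Finset.sum_mul_sq_le_sq_mul_sq Finset.univ
      (fun a => Real.sqrt (⟪u a, T (u a)⟫ / π a))
      (fun a => Real.sqrt (π a * ⟪φ a, z a⟫))
    have e1 : ∀ a : Fin K, Real.sqrt (⟪u a, T (u a)⟫ / π a) ^ 2 = ⟪u a, T (u a)⟫ / π a := by
      intro a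
      exact Real.sq_sqrt (div_nonneg (hQpos _) (hπ a))
    have e2 : ∀ a : Fin K, Real.sqrt (π a * ⟪φ a, z a⟫) ^ 2 = π a * ⟪φ a, z a⟫ := by
      intro a
      exact Real.sq_sqrt (mul_nonneg (hπ a) (hφz a))
    calc (∑ a, ⟪u a, φ a⟫) ^ 2 = |∑ a, ⟪u a, φ a⟫| ^ 2 := (sq_abs _).symm
      _ ≤ (∑ a, Real.sqrt (⟪u a, T (u a)⟫ / π a) * Real.sqrt (π a * ⟪φ a, z a⟫)) ^ 2 := by
          apply pow_le_pow_left₀ (abs_nonneg _) step1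
      _ ≤ (∑ a, Real.sqrt (⟪u a, T (u a)⟫ / π a) ^ 2)
            * (∑ a, Real.sqrt (π a * ⟪φ a, z a⟫) ^ 2) := hs
      _ = (∑ a, ⟪u a, T (u a)⟫ / π a) * (∑ a, π a * ⟪φ a, z a⟫) := by
          rw [Finset.sum_congr rfl fun a _ => e1 a, Finset.sum_congr rfl fun a _ => e2 a]
  -- identify the first factor
  have h3 : ∑ a, ⟪u a, T (u a)⟫ / π a
      = (∑ a, (∑ b, π b * ⟪u a, φ b⟫ ^ 2) / π a) + ε * ∑ a, ‖u a‖ ^ 2 / π a := by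
    rw [Finset.mul_sum, ← Finset.sum_add_distrib]
    refine Finset.sum_congr rfl fun a _ => ?_
    rw [hQ]
    have hsum : ∑ b, π b * ⟪φ b, u a⟫ ^ 2 = ∑ b, π b * ⟪u a, φ b⟫ ^ 2 :=
      Finset.sum_congr rfl fun b _ => by rw [real_inner_comm]
    rw [hsum, add_div, mul_div_assoc]
    ring
  have hfirst_nonneg : 0 ≤ ∑ a, ⟪u a, T (u a)⟫ / π a :=
    Finset.sum_nonneg fun a _ => div_nonneg (hQpos _) (hπ a)
  calc (∑ a, ⟪u a, φ a⟫) ^ 2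
      ≤ (∑ a, ⟪u a, T (u a)⟫ / π a) * (∑ a, π a * ⟪φ a, z a⟫) := h2
    _ ≤ (∑ a, ⟪u a, T (u a)⟫ / π a) * d := by
        apply mul_le_mul_of_nonneg_left htr hfirst_nonneg
    _ = ((∑ a, (∑ b, π b * ⟪u a, φ b⟫ ^ 2) / π a) + ε * ∑ a, ‖u a‖ ^ 2 / π a) * d := by
        rw [h3]


lemma lin_alg (π : Fin K → ℝ) (hπ : ∀ a, 0 ≤ π a)
    (u φ : Fin K → E) (hu0 : ∀ a, π a = 0 → u a = 0) :
    (∑ a, ⟪u a, φ a⟫) ^ 2 ≤ (d : ℝ) * ∑ a, (∑ b, π b * ⟪u a, φ b⟫ ^ 2) / π a := by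
  set A := ∑ a, (∑ b, π b * ⟪u a, φ b⟫ ^ 2) / π a with hA
  set B := ∑ a, ‖u a‖ ^ 2 / π a with hB
  have hB0 : 0 ≤ B := Finset.sum_nonneg fun a _ => div_nonneg (by positivity) (hπ a)
  have key : ∀ ε : ℝ, 0 < ε → (∑ a, ⟪u a, φ a⟫) ^ 2 ≤ (d : ℝ) * A + ((d : ℝ) * B) * ε := by
    intro ε hε
    have := lin_alg_eps π hπ u φ hu0 hε
    calc (∑ a, ⟪u a, φ a⟫) ^ 2 ≤ (A + ε * B) * d := this
      _ = (d : ℝ) * A + ((d : ℝ) * B) * ε := by ring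
  apply le_of_forall_pos_le_add
  intro δ hδ
  have hdB : (0:ℝ) ≤ (d : ℝ) * B := by positivity
  have hε : 0 < δ / ((d : ℝ) * B + 1) := by positivity
  calc (∑ a, ⟪u a, φ a⟫) ^ 2 ≤ (d : ℝ) * A + ((d : ℝ) * B) * (δ / ((d : ℝ) * B + 1)) :=
      key _ hε
    _ ≤ (d : ℝ) * A + δ := by
      have h1 : ((d : ℝ) * B) * (δ / ((d : ℝ) * B + 1)) ≤ δ := by
        rw [mul_div_assoc']
        rw [div_le_iff₀ (by positivity)]
        nlinarith
      linarith

end LinAlg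

/-- One-round Thompson sampling with `d`-dimensional linear expected losses
taking values in `[0,1]`: `R² ≤ (d/2) I`, i.e. the lifted information ratio is
at most `d/2`. -/
theorem sq_regret_le_half_d_mul_infoGain
    {Θ : Type*} [Countable Θ] {K d : ℕ} (hK : 1 ≤ K)
    (μ : Θ → ℝ) (hμ0 : ∀ θ, 0 ≤ μ θ) (hμ1 : HasSum μ 1)
    (ℓ : Θ → Fin K → ℝ) (hℓ : ∀ θ a, ℓ θ a ∈ Set.Icc (0 : ℝ) 1)
    (v : Θ → EuclideanSpace ℝ (Fin d)) (φ : Fin K → EuclideanSpace ℝ (Fin d))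
    (hlin : ∀ θ a, ℓ θ a = (inner ℝ (v θ) (φ a) : ℝ))
    (astar : Θ → Fin K)
    (lbar : Fin K → ℝ) (hlbar : ∀ a, lbar a = ∑' θ, μ θ * ℓ θ a)
    (hlbar01 : ∀ a, lbar a ∈ Set.Ioo (0 : ℝ) 1)
    (R I : ℝ)
    (hR : R = ∑' θ, ∑' θ', μ θ * μ θ' * (ℓ θ (astar θ') - ℓ θ (astar θ)))
    (hI : I = ∑' θ, ∑' θ',
      μ θ * μ θ' * binRelEnt (ℓ θ (astar θ')) (lbar (astar θ'))) :
    R ^ 2 ≤ ((d : ℝ) / 2) * I := by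
  classical
  have hμs : Summable μ := hμ1.summable
  have hμt : ∑' θ, μ θ = 1 := hμ1.tsum_eq
  have hℓ0 : ∀ θ b, 0 ≤ ℓ θ b := fun θ b => (hℓ θ b).1
  have hℓ1 : ∀ θ b, ℓ θ b ≤ 1 := fun θ b => (hℓ θ b).2
  have hdom : ∀ (f : Θ → ℝ) (C : ℝ), (∀ θ, |f θ| ≤ C * μ θ) → Summable f := by
    intro f C h
    apply Summable.of_abs
    exact Summable.of_nonneg_of_le (fun θ => abs_nonneg _) h (hμs.mul_left C)
  set ind : Fin K → Θ → ℝ := fun a θ => if astar θ = a then μ θ else 0 with hind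
  have hind0 : ∀ a θ, 0 ≤ ind a θ := by
    intro a θ
    by_cases h : astar θ = a <;> simp [hind, h, hμ0 θ]
  have hindle : ∀ a θ, ind a θ ≤ μ θ := by
    intro a θ
    by_cases h : astar θ = a <;> simp [hind, h, hμ0 θ]
  have hindsum : ∀ a, Summable (ind a) := by
    intro a
    apply hdom _ 1
    intro θ
    rw [one_mul, abs_of_nonneg (hind0 a θ)]
    exact hindle a θ
  set π : Fin K → ℝ := fun a => ∑' θ, ind a θ with hπdef
  have hπ0 : ∀ a, 0 ≤ π a := fun a => tsum_nonneg (hind0 a)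
  have hLsum : ∀ a b, Summable (fun θ => ind a θ * ℓ θ b) := by
    intro a b
    apply hdom _ 1
    intro θ
    rw [one_mul, abs_of_nonneg (mul_nonneg (hind0 a θ) (hℓ0 θ b))]
    calc ind a θ * ℓ θ b ≤ ind a θ * 1 := by
          exact mul_le_mul_of_nonneg_left (hℓ1 θ b) (hind0 a θ)
      _ = ind a θ := mul_one _
      _ ≤ μ θ := hindle a θ
  set L : Fin K → Fin K → ℝ := fun a b => ∑' θ, ind a θ * ℓ θ b with hLdef
  set c : Fin K → Fin K → ℝ := fun a b => π a * lbar b - L a b with hcdef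
  have hμℓsum : ∀ b, Summable (fun θ => μ θ * ℓ θ b) := by
    intro b
    apply hdom _ 1
    intro θ
    rw [one_mul, abs_of_nonneg (mul_nonneg (hμ0 θ) (hℓ0 θ b))]
    calc μ θ * ℓ θ b ≤ μ θ * 1 := mul_le_mul_of_nonneg_left (hℓ1 θ b) (hμ0 θ)
      _ = μ θ := mul_one _
  -- grouping lemma
  have hgroup : ∀ (h : Θ → ℝ), Summable h →
      ∑' θ, h θ = ∑ a, ∑' θ, if astar θ = a then h θ else 0 := by
    intro h hs
    have h1 : ∀ a : Fin K, Summable (fun θ => if astar θ = a then h θ else 0) := by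
      intro a
      have := hs.indicator {θ | astar θ = a}
      apply this.congr
      intro θ
      simp [Set.indicator_apply]
    rw [← Summable.tsum_finsetSum (fun a _ => h1 a)]
    apply tsum_congr
    intro θ
    rw [Finset.sum_ite_eq]
    simp
  -- grouping by astar for the second variable, for functions of the action
  have hgroupc : ∀ (g : Fin K → ℝ), ∑' θ', μ θ' * g (astar θ') = ∑ b, π b * g b := by
    intro g
    have hs : Summable fun θ' => μ θ' * g (astar θ') := by
      apply hdom _ (∑ b, |g b|)
      intro θ
      rw [abs_mul, abs_of_nonneg (hμ0 θ), mul_comm]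
      apply mul_le_mul_of_nonneg_right _ (hμ0 θ)
      exact Finset.single_le_sum (f := fun b => |g b|) (fun b _ => abs_nonneg _)
        (Finset.mem_univ (astar θ))
    rw [hgroup _ hs]
    apply Finset.sum_congr rfl
    intro b _
    have h2 : (fun θ' => if astar θ' = b then μ θ' * g (astar θ') else 0)
        = fun θ' => ind b θ' * g b := by
      funext θ'
      by_cases h : astar θ' = b <;> simp [hind, h]
    rw [h2, tsum_mul_right, mul_comm]
  -- R = ∑ a, c a a
  have hRid : R = ∑ a, c a a := by
    have hRinner : ∀ θ0, (∑' θ', μ θ0 * μ θ' * (ℓ θ0 (astar θ') - ℓ θ0 (astar θ0)))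
        = μ θ0 * (∑ b, π b * ℓ θ0 b) - μ θ0 * ℓ θ0 (astar θ0) := by
      intro θ0
      have h1 : ∀ θ', μ θ0 * μ θ' * (ℓ θ0 (astar θ') - ℓ θ0 (astar θ0))
          = μ θ0 * (μ θ' * ℓ θ0 (astar θ')) - (μ θ0 * ℓ θ0 (astar θ0)) * μ θ' := by
        intro θ'; ring
      rw [tsum_congr h1]
      have hs1 : Summable fun θ' => μ θ0 * (μ θ' * ℓ θ0 (astar θ')) := by
        apply Summable.mul_left
        apply hdom _ 1
        intro θ'
        rw [one_mul, abs_of_nonneg (mul_nonneg (hμ0 θ') (hℓ0 θ0 _))]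
        calc μ θ' * ℓ θ0 (astar θ') ≤ μ θ' * 1 :=
              mul_le_mul_of_nonneg_left (hℓ1 θ0 _) (hμ0 θ')
          _ = μ θ' := mul_one _
      have hs2 : Summable fun θ' => (μ θ0 * ℓ θ0 (astar θ0)) * μ θ' := hμs.mul_left _
      rw [Summable.tsum_sub hs1 hs2, tsum_mul_left, tsum_mul_left, hμt, mul_one]
      congr 1
      rw [hgroupc (fun b => ℓ θ0 b)]
    rw [hR, tsum_congr hRinner]
    have hs1 : Summable fun θ0 => μ θ0 * (∑ b, π b * ℓ θ0 b) := by
      apply hdom _ (∑ b, π b)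
      intro θ
      rw [abs_mul, abs_of_nonneg (hμ0 θ), mul_comm]
      apply mul_le_mul_of_nonneg_right _ (hμ0 θ)
      rw [abs_of_nonneg (Finset.sum_nonneg fun b _ => mul_nonneg (hπ0 b) (hℓ0 θ b))]
      apply Finset.sum_le_sum
      intro b _
      calc π b * ℓ θ b ≤ π b * 1 := mul_le_mul_of_nonneg_left (hℓ1 θ b) (hπ0 b)
        _ = π b := mul_one _
    have hs2 : Summable fun θ0 => μ θ0 * ℓ θ0 (astar θ0) := by
      apply hdom _ 1
      intro θ
      rw [one_mul, abs_of_nonneg (mul_nonneg (hμ0 θ) (hℓ0 θ _))]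
      calc μ θ * ℓ θ (astar θ) ≤ μ θ * 1 := mul_le_mul_of_nonneg_left (hℓ1 θ _) (hμ0 θ)
        _ = μ θ := mul_one _
    rw [Summable.tsum_sub hs1 hs2]
    have hfirst : ∑' θ0, μ θ0 * (∑ b, π b * ℓ θ0 b) = ∑ b, π b * lbar b := by
      have hptwise : ∀ θ0 : Θ, μ θ0 * (∑ b, π b * ℓ θ0 b)
          = ∑ b, π b * (μ θ0 * ℓ θ0 b) := by
        intro θ0
        rw [Finset.mul_sum]
        exact Finset.sum_congr rfl fun b _ => by ring
      rw [tsum_congr hptwise, Summable.tsum_finsetSum (fun b _ => ((hμℓsum b).mul_left (π b)))]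
      apply Finset.sum_congr rfl
      intro b _
      rw [tsum_mul_left, ← hlbar b]
    have hsecond : ∑' θ0, μ θ0 * ℓ θ0 (astar θ0) = ∑ a, L a a := by
      rw [hgroup _ hs2]
      apply Finset.sum_congr rfl
      intro a _
      simp only [hLdef]
      apply tsum_congr
      intro θ
      by_cases h : astar θ = a <;> simp [hind, h]
    rw [hfirst, hsecond, ← Finset.sum_sub_distrib]
  -- I lower bound
  have hbin0 : ∀ (θ0 : Θ) (b : Fin K), 0 ≤ binRelEnt (ℓ θ0 b) (lbar b) := by
    intro θ0 b
    exact le_trans (by positivity) (pinsker (hℓ θ0 b) (hlbar01 b))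
  have hbinC : ∀ (θ0 : Θ) (b : Fin K),
      binRelEnt (ℓ θ0 b) (lbar b) ≤ -Real.log (lbar b) - Real.log (1 - lbar b) :=
    fun θ0 b => binRelEnt_le (hℓ θ0 b) (hlbar01 b)
  set Cb : Fin K → ℝ := fun b => -Real.log (lbar b) - Real.log (1 - lbar b) with hCbdef
  have hgsum : ∀ b, Summable (fun θ0 => μ θ0 * binRelEnt (ℓ θ0 b) (lbar b)) := by
    intro b
    apply hdom _ (Cb b)
    intro θ
    rw [abs_of_nonneg (mul_nonneg (hμ0 θ) (hbin0 θ b)), mul_comm]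
    exact mul_le_mul_of_nonneg_right (hbinC θ b) (hμ0 θ)
  have hIid : I = ∑ b, π b * ∑' θ0, μ θ0 * binRelEnt (ℓ θ0 b) (lbar b) := by
    have hIinner : ∀ θ0, (∑' θ', μ θ0 * μ θ' * binRelEnt (ℓ θ0 (astar θ')) (lbar (astar θ')))
        = μ θ0 * (∑ b, π b * binRelEnt (ℓ θ0 b) (lbar b)) := by
      intro θ0
      have h1 : ∀ θ', μ θ0 * μ θ' * binRelEnt (ℓ θ0 (astar θ')) (lbar (astar θ'))
          = μ θ0 * (μ θ' * binRelEnt (ℓ θ0 (astar θ')) (lbar (astar θ'))) := by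
        intro θ'; ring
      rw [tsum_congr h1, tsum_mul_left,
        hgroupc (fun b => binRelEnt (ℓ θ0 b) (lbar b))]
    rw [hI, tsum_congr hIinner]
    have hptwise : ∀ θ0 : Θ, μ θ0 * (∑ b, π b * binRelEnt (ℓ θ0 b) (lbar b))
        = ∑ b, π b * (μ θ0 * binRelEnt (ℓ θ0 b) (lbar b)) := by
      intro θ0
      rw [Finset.mul_sum]
      exact Finset.sum_congr rfl fun b _ => by ring
    rw [tsum_congr hptwise, Summable.tsum_finsetSum (fun b _ => (hgsum b).mul_left (π b))]
    exact Finset.sum_congr rfl fun b _ => by rw [tsum_mul_left]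
  -- variance quantities
  set V : Fin K → ℝ := fun b => ∑' θ0, μ θ0 * (ℓ θ0 b - lbar b) ^ 2 with hVdef
  set W : Fin K → Fin K → ℝ := fun a b => ∑' θ, ind a θ * (ℓ θ b - lbar b) ^ 2 with hWdef
  have hsqb : ∀ (θ : Θ) (b : Fin K), (ℓ θ b - lbar b) ^ 2 ≤ 1 := by
    intro θ b
    have h1 := hℓ0 θ b
    have h2 := hℓ1 θ b
    have h3 := (hlbar01 b).1
    have h4 := (hlbar01 b).2
    nlinarith
  have hVsum : ∀ b, Summable (fun θ0 => μ θ0 * (ℓ θ0 b - lbar b) ^ 2) := by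
    intro b
    apply hdom _ 1
    intro θ
    rw [one_mul, abs_of_nonneg (mul_nonneg (hμ0 θ) (sq_nonneg _))]
    calc μ θ * (ℓ θ b - lbar b) ^ 2 ≤ μ θ * 1 :=
          mul_le_mul_of_nonneg_left (hsqb θ b) (hμ0 θ)
      _ = μ θ := mul_one _
  have hWsum : ∀ a b, Summable (fun θ => ind a θ * (ℓ θ b - lbar b) ^ 2) := by
    intro a b
    apply hdom _ 1
    intro θ
    rw [one_mul, abs_of_nonneg (mul_nonneg (hind0 a θ) (sq_nonneg _))]
    calc ind a θ * (ℓ θ b - lbar b) ^ 2 ≤ ind a θ * 1 :=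
          mul_le_mul_of_nonneg_left (hsqb θ b) (hind0 a θ)
      _ = ind a θ := mul_one _
      _ ≤ μ θ := hindle a θ
  have hπzero : ∀ a, π a = 0 → ∀ θ, ind a θ = 0 := by
    intro a ha θ
    have h1 : ind a θ ≤ π a := Summable.le_tsum (hindsum a) θ (fun j _ => hind0 a j)
    have h2 := hind0 a θ
    rw [ha] at h1
    linarith
  have hczero : ∀ a, π a = 0 → ∀ b, c a b = 0 := by
    intro a ha b
    have hL0 : L a b = 0 := by
      simp only [hLdef]
      have : ∀ θ : Θ, ind a θ * ℓ θ b = 0 := fun θ => by rw [hπzero a ha θ, zero_mul]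
      rw [tsum_congr this, tsum_zero]
    simp only [hcdef, hL0, ha, zero_mul, sub_zero]
  -- Cauchy-Schwarz within groups
  have hCSgroup : ∀ a b, (c a b) ^ 2 ≤ π a * W a b := by
    intro a b
    have hcs := tsum_cauchy_schwarz (f := ind a) (x := fun θ => ℓ θ b - lbar b)
      (hind0 a) (hindsum a) ?_ (hWsum a b)
    · have hmean : ∑' θ, ind a θ * (ℓ θ b - lbar b) = -(c a b) := by
        have h1 : ∀ θ : Θ, ind a θ * (ℓ θ b - lbar b)
            = ind a θ * ℓ θ b - ind a θ * lbar b := fun θ => by ring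
        rw [tsum_congr h1, Summable.tsum_sub (hLsum a b) ((hindsum a).mul_right (lbar b)),
          tsum_mul_right]
        simp only [hcdef, hLdef, hπdef]
        ring
      rw [hmean] at hcs
      rw [← neg_sq (c a b)]
      calc (-(c a b)) ^ 2 ≤ (∑' θ, ind a θ) * ∑' θ, ind a θ * (ℓ θ b - lbar b) ^ 2 := hcs
        _ = π a * W a b := rfl
    · apply hdom _ 1
      intro θ
      rw [one_mul, abs_mul, abs_of_nonneg (hind0 a θ)]
      have habs : |ℓ θ b - lbar b| ≤ 1 := by
        have h1 := hℓ0 θ b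
        have h2 := hℓ1 θ b
        have h3 := (hlbar01 b).1
        have h4 := (hlbar01 b).2
        rw [abs_le]
        constructor <;> linarith
      calc ind a θ * |ℓ θ b - lbar b| ≤ ind a θ * 1 :=
            mul_le_mul_of_nonneg_left habs (hind0 a θ)
        _ = ind a θ := mul_one _
        _ ≤ μ θ := hindle a θ
  -- V = ∑ a, W a b
  have hVgroup : ∀ b, V b = ∑ a, W a b := by
    intro b
    simp only [hVdef]
    rw [hgroup _ (hVsum b)]
    apply Finset.sum_congr rfl
    intro a _
    apply tsum_congr
    intro θ
    by_cases h : astar θ = a <;> simp [hind, h]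
  -- the key sum S
  set S : ℝ := ∑ a, (∑ b, π b * (c a b) ^ 2) / π a with hSdef
  have hWnn : ∀ a b, 0 ≤ W a b :=
    fun a b => tsum_nonneg fun θ => mul_nonneg (hind0 a θ) (sq_nonneg _)
  have hSle : S ≤ ∑ a, ∑ b, π b * W a b := by
    apply Finset.sum_le_sum
    intro a _
    rcases eq_or_lt_of_le (hπ0 a) with h | h
    · have hz : ∀ b, c a b = 0 := hczero a h.symm
      have : (∑ b, π b * (c a b) ^ 2) = 0 := by
        apply Finset.sum_eq_zero
        intro b _
        rw [hz b]
        ring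
      rw [this, zero_div]
      exact Finset.sum_nonneg fun b _ => mul_nonneg (hπ0 b) (hWnn a b)
    · rw [div_le_iff₀ h]
      rw [Finset.sum_mul]
      apply Finset.sum_le_sum
      intro b _
      calc π b * (c a b) ^ 2 ≤ π b * (π a * W a b) :=
            mul_le_mul_of_nonneg_left (hCSgroup a b) (hπ0 b)
        _ = π b * W a b * π a := by ring
  have hIlow : 2 * S ≤ I := by
    have h1 : ∑ a, ∑ b, π b * W a b = ∑ b, π b * V b := by
      rw [Finset.sum_comm]
      apply Finset.sum_congr rfl
      intro b _
      rw [hVgroup b, Finset.mul_sum]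
    have h2 : ∀ b, 2 * (π b * V b) ≤ π b * ∑' θ0, μ θ0 * binRelEnt (ℓ θ0 b) (lbar b) := by
      intro b
      have hptw : ∀ θ0 : Θ, μ θ0 * (2 * (ℓ θ0 b - lbar b) ^ 2)
          ≤ μ θ0 * binRelEnt (ℓ θ0 b) (lbar b) := by
        intro θ0
        exact mul_le_mul_of_nonneg_left (pinsker (hℓ θ0 b) (hlbar01 b)) (hμ0 θ0)
      have hVle : 2 * V b ≤ ∑' θ0, μ θ0 * binRelEnt (ℓ θ0 b) (lbar b) := by
        have hts : ∑' θ0, μ θ0 * (2 * (ℓ θ0 b - lbar b) ^ 2) = 2 * V b := by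
          have : ∀ θ0 : Θ, μ θ0 * (2 * (ℓ θ0 b - lbar b) ^ 2)
              = 2 * (μ θ0 * (ℓ θ0 b - lbar b) ^ 2) := fun θ0 => by ring
          rw [tsum_congr this, tsum_mul_left]
        rw [← hts]
        exact Summable.tsum_le_tsum hptw ((hVsum b).mul_left 2 |>.congr (fun θ0 => by ring))
          (hgsum b)
      calc 2 * (π b * V b) = π b * (2 * V b) := by ring
        _ ≤ π b * ∑' θ0, μ θ0 * binRelEnt (ℓ θ0 b) (lbar b) :=
            mul_le_mul_of_nonneg_left hVle (hπ0 b)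
    calc 2 * S ≤ 2 * ∑ a, ∑ b, π b * W a b := by linarith [hSle]
      _ = ∑ b, 2 * (π b * V b) := by
          rw [h1, Finset.mul_sum]
      _ ≤ ∑ b, π b * ∑' θ0, μ θ0 * binRelEnt (ℓ θ0 b) (lbar b) :=
          Finset.sum_le_sum fun b _ => h2 b
      _ = I := hIid.symm
  -- dual vectors
  have hgen : ∀ (y : Fin K → ℝ), (∑ b, y b • φ b) = 0 → ∀ (w : Θ → ℝ),
      (∀ θ, |w θ| ≤ μ θ) → ∑ b, y b * (∑' θ, w θ * ℓ θ b) = 0 := by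
    intro y hy w hw
    have hwsum : ∀ b, Summable fun θ => y b * (w θ * ℓ θ b) := by
      intro b
      apply hdom _ |y b|
      intro θ
      rw [abs_mul, abs_mul]
      apply mul_le_mul_of_nonneg_left _ (abs_nonneg (y b))
      calc |w θ| * |ℓ θ b| ≤ μ θ * 1 := by
            apply mul_le_mul (hw θ) _ (abs_nonneg _) (hμ0 θ)
            rw [abs_of_nonneg (hℓ0 θ b)]
            exact hℓ1 θ b
        _ = μ θ := mul_one _
    have h1 : ∀ b : Fin K, y b * (∑' θ, w θ * ℓ θ b) = ∑' θ, y b * (w θ * ℓ θ b) := by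
      intro b
      rw [tsum_mul_left]
    rw [Finset.sum_congr rfl fun b _ => h1 b, ← Summable.tsum_finsetSum (fun b _ => hwsum b)]
    have hptw : ∀ θ : Θ, ∑ b, y b * (w θ * ℓ θ b) = 0 := by
      intro θ
      have h2 : ∑ b, y b * (w θ * ℓ θ b) = w θ * ⟪v θ, ∑ b, y b • φ b⟫ := by
        rw [inner_sum, Finset.mul_sum]
        apply Finset.sum_congr rfl
        intro b _
        rw [real_inner_smul_right, ← hlin θ b]
        ring
      rw [h2, hy, inner_zero_right, mul_zero]
    rw [tsum_congr hptw, tsum_zero]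
  have hcu : ∀ a, ∃ u : EuclideanSpace ℝ (Fin d), ∀ b, ⟪u, φ b⟫ = c a b := by
    intro a
    apply exists_dual_vec
    intro y hy
    have e1 : ∑ b, y b * lbar b = 0 := by
      have := hgen y hy μ (fun θ => le_of_eq (abs_of_nonneg (hμ0 θ)))
      rw [← this]
      exact Finset.sum_congr rfl fun b _ => by rw [hlbar b]
    have e2 : ∑ b, y b * L a b = 0 := by
      have := hgen y hy (ind a) (fun θ => by
        rw [abs_of_nonneg (hind0 a θ)]; exact hindle a θ)
      rw [← this]
    have e3 : ∀ b, y b * c a b = π a * (y b * lbar b) - y b * L a b := by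
      intro b
      simp only [hcdef]
      ring
    rw [Finset.sum_congr rfl fun b _ => e3 b, Finset.sum_sub_distrib, ← Finset.mul_sum,
      e1, e2, mul_zero, sub_zero]
  choose u0 hu0spec using hcu
  set u' : Fin K → EuclideanSpace ℝ (Fin d) := fun a => if π a = 0 then 0 else u0 a with hu'def
  have hu'b : ∀ a b, ⟪u' a, φ b⟫ = c a b := by
    intro a b
    by_cases h : π a = 0
    · simp only [hu'def, if_pos h, inner_zero_left]
      exact (hczero a h b).symm
    · simp only [hu'def, if_neg h]
      exact hu0spec a b
  have hu'0 : ∀ a, π a = 0 → u' a = 0 := by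
    intro a h
    simp [hu'def, h]
  have hla := lin_alg π hπ0 u' φ hu'0
  have hRu : R = ∑ a, ⟪u' a, φ a⟫ := by
    rw [hRid]
    exact (Finset.sum_congr rfl fun a _ => hu'b a a).symm
  have hlaS : R ^ 2 ≤ (d : ℝ) * S := by
    rw [hRu]
    calc (∑ a, ⟪u' a, φ a⟫) ^ 2
        ≤ (d : ℝ) * ∑ a, (∑ b, π b * ⟪u' a, φ b⟫ ^ 2) / π a := hla
      _ = (d : ℝ) * S := by
          congr 1
          apply Finset.sum_congr rfl
          intro a _
          congr 1
          exact Finset.sum_congr rfl fun b _ => by rw [hu'b a b]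
  have hd0 : (0:ℝ) ≤ (d : ℝ) := Nat.cast_nonneg d
  calc R ^ 2 ≤ (d : ℝ) * S := hlaS
    _ ≤ (d : ℝ) * (I / 2) := by
        apply mul_le_mul_of_nonneg_left _ hd0
        linarith [hIlow]
    _ = (d : ℝ) / 2 * I := by ring
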